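/- Let K be a field of characteristic 0 and let k, ℓ be natural numbers. The polynomial F^{k,ℓ}(X,Y)(U) = Σ_{X'⊂_k X, Y'⊂_ℓ Y} s_{X'} s_{Y'} V((Y∖Y')‖(X∖X')) · V(Y'‖X'‖U), where the sum runs over k-element sublists X' of X = (X_1,...,X_p) and ℓ-element sublists Y' of Y = (Y_1,...,Y_q), is antisymmetric in the variables X and antisymmetric in the variables Y. -/

import Mathlib

noncomputable section

open Polynomial Finset

variable {R : Type*} [CommRing R]

/-- Hermite-derivated Vandermonde column: entry in row `r` of the column attached to
the pair `(z, j)` is `(1/j!)·dʲ/dzʲ zʳ = C(r,j)·z^(r-j)`. -/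
def hcol (n : ℕ) (zj : R × ℕ) : Fin n → R :=
  fun r => ((r : ℕ).choose zj.2 : R) * zj.1 ^ ((r : ℕ) - zj.2)

/-- Generalized (confluent) Vandermonde determinant of a list of
(point, derivation order) pairs. -/
def gvd (l : List (R × ℕ)) : R :=
  (Matrix.of fun i j : Fin l.length => hcol l.length (l.get j) i).det

/-- View a list of ring elements as underivated column data. -/
def plain (l : List R) : List (R × ℕ) := l.map (fun x => (x, 0))

/-- `Pi2 A B = ∏_{x ∈ A, y ∈ B} (x - y)`. -/
def Pi2 (A B : List R) : R := (A.map fun x => (B.map fun y => x - y).prod).prod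

/-- The ordered sublist of values of `f` indexed by a finite set of positions. -/
def subL {α : Type*} {n : ℕ} (f : Fin n → α) (S : Finset (Fin n)) : List α :=
  (S.sort (· ≤ ·)).map f

/-- The list enumerating first the complement of `S` in increasing order,
then `S` in increasing order. -/
def splitList {n : ℕ} (S : Finset (Fin n)) : List (Fin n) :=
  (Sᶜ.sort (· ≤ ·)) ++ (S.sort (· ≤ ·))

lemma splitList_length {n : ℕ} (S : Finset (Fin n)) : (splitList S).length = n := by
  have h : S.card ≤ n := le_trans (Finset.card_le_univ S) (by simp)
  simp [splitList, Finset.card_compl]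
  omega

lemma splitList_nodup {n : ℕ} (S : Finset (Fin n)) : (splitList S).Nodup := by
  refine List.Nodup.append (Finset.sort_nodup _ _) (Finset.sort_nodup _ _) ?_
  intro a ha hb
  rw [Finset.mem_sort] at ha hb
  exact (Finset.mem_compl.mp ha) hb

/-- The permutation of `Fin n` sending `i` to the `i`-th element of the list
`(Sᶜ sorted) ++ (S sorted)`. -/
def splitPerm {n : ℕ} (S : Finset (Fin n)) : Equiv.Perm (Fin n) :=
  Equiv.ofBijective (fun i => (splitList S).get (finCongr (splitList_length S).symm i))
    (Finite.injective_iff_bijective.mp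
      (fun i j h => (finCongr (splitList_length S).symm).injective
        (List.nodup_iff_injective_get.mp (splitList_nodup S) h)))

/-- The signature `s_S` of the permutation putting the ambient ordered set in the
order (complement of S)‖S. -/
def sgnK {n : ℕ} (S : Finset (Fin n)) : ℤ := Equiv.Perm.sign (splitPerm S)

/-- `V[L‖U)` : generalized Vandermonde determinant over `K[U]` of derivated columns
given by `l` followed by the plain column of the variable `U`. -/
def gvdU {K : Type*} [Field K] (l : List (K × ℕ)) : Polynomial K :=
  gvd ((l.map fun zj => (Polynomial.C zj.1, zj.2)) ++ [(Polynomial.X, (0:ℕ))])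

/-- Multivariate version: `V[l‖U₁‖…‖U_u)`. -/
def gvdMU {K : Type*} [Field K] (u : ℕ) (l : List (K × ℕ)) : MvPolynomial (Fin u) K :=
  gvd ((l.map fun zj => (MvPolynomial.C zj.1, zj.2)) ++
    (List.finRange u).map (fun i => (MvPolynomial.X i, (0:ℕ))))

/-- The multivariate Vandermonde polynomial `∏_{i < j} (U_j - U_i)`. -/
def mvVandermonde (K : Type*) [Field K] (u : ℕ) : MvPolynomial (Fin u) K :=
  ∏ j : Fin u, ∏ i ∈ Finset.Iio j, (MvPolynomial.X j - MvPolynomial.X i)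

/-- The ordered root multiset attached to distinct roots `x i` with
multiplicities `μ i`. -/
def rootList {K : Type*} (x : Fin m → K) (μ : Fin m → ℕ) : List (K × ℕ) :=
  (List.finRange m).flatMap (fun i => (List.range (μ i)).map (fun j => (x i, j)))

/-- The generalized Sylvester double sum `Sylv^{k,ℓ}` of two monic polynomials
given by their root multisets `Pl` and `Ql`. -/
def sylv {K : Type*} [Field K] (Pl Ql : List (K × ℕ)) (k l : ℕ) : Polynomial K :=
  Polynomial.C ((gvd Pl * gvd Ql)⁻¹) *
    ∑ S ∈ Finset.powersetCard k (Finset.univ : Finset (Fin Pl.length)),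
      ∑ T ∈ Finset.powersetCard l (Finset.univ : Finset (Fin Ql.length)),
        (sgnK S * sgnK T) •
          (Polynomial.C (gvd (subL Ql.get Tᶜ ++ subL Pl.get Sᶜ)) *
            gvdU (subL Ql.get T ++ subL Pl.get S))

/-- `MSylv^{k,ℓ}(P,Q)(U) · V(U)` : the multi Sylvester double sum multiplied by the
ordinary Vandermonde determinant of the block `U` of `u` indeterminates. -/
def msylvV {K : Type*} [Field K] (Pl Ql : List (K × ℕ)) (k l u : ℕ) :
    MvPolynomial (Fin u) K :=
  MvPolynomial.C ((gvd Pl * gvd Ql)⁻¹) *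
    ∑ S ∈ Finset.powersetCard k (Finset.univ : Finset (Fin Pl.length)),
      ∑ T ∈ Finset.powersetCard l (Finset.univ : Finset (Fin Ql.length)),
        (sgnK S * sgnK T) •
          (MvPolynomial.C (gvd (subL Ql.get Tᶜ ++ subL Pl.get Sᶜ)) *
            gvdMU u (subL Ql.get T ++ subL Pl.get S))

/-- The ordered root multiset of a polynomial over an algebraically closed field. -/
def rootListOf {K : Type*} [Field K] (P : Polynomial K) : List (K × ℕ) :=
  letI := Classical.decEq K
  P.roots.toFinset.toList.flatMap
    (fun z => (List.range (P.rootMultiplicity z)).map (fun j => (z, j)))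

/-- The Sylvester double sum of two not-necessarily-monic polynomials. -/
def sylvP {K : Type*} [Field K] (P Q : Polynomial K) (k l : ℕ) : Polynomial K :=
  Polynomial.C (P.leadingCoeff ^ (Q.natDegree - (k + l)) *
      Q.leadingCoeff ^ (P.natDegree - (k + l))) *
    sylv (rootListOf P) (rootListOf Q) k l

/-- Rows of the Sylvester–Habicht matrix at level `j`:
`X^{q-j-1}P, …, P, Q, X Q, …, X^{p-j-1}Q`. -/
def sylvHabRow {K : Type*} [Field K] (P Q : Polynomial K) (j i : ℕ) : Polynomial K :=
  if i < Q.natDegree - j then Polynomial.X ^ (Q.natDegree - j - 1 - i) * P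
  else Polynomial.X ^ (i - (Q.natDegree - j)) * Q

/-- The `j`-th subresultant polynomial of `P` and `Q`, as the polynomial determinant
of the Sylvester–Habicht matrix at level `j`. -/
def Sres {K : Type*} [Field K] (P Q : Polynomial K) (j : ℕ) : Polynomial K :=
  (Matrix.of fun i c : Fin (P.natDegree + Q.natDegree - 2 * j) =>
    if (c : ℕ) < P.natDegree + Q.natDegree - 2 * j - 1 then
      Polynomial.C ((sylvHabRow P Q j i).coeff (P.natDegree + Q.natDegree - j - 1 - c))
    else
      ∑ t ∈ Finset.range (j + 1),
        Polynomial.C ((sylvHabRow P Q j i).coeff t) * Polynomial.X ^ t).det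

/-- Iterated normalized Hermite derivation of a multivariate polynomial: for each
variable `i`, apply `(1/(c i).2!)·∂^{(c i).2}/∂X_i^{(c i).2}`. -/
def hderiv {K : Type*} [Field K] {n : ℕ} (c : Fin n → K × ℕ)
    (f : MvPolynomial (Fin n) K) : MvPolynomial (Fin n) K :=
  (List.finRange n).foldl
    (fun g i => (((c i).2.factorial : K)⁻¹) • ((MvPolynomial.pderiv i)^[(c i).2] g)) f

/-- Hermite evaluation: apply the normalized derivations prescribed by `c` and
then substitute the points prescribed by `c`. -/
def hermiteEval {K : Type*} [Field K] {n : ℕ} (c : Fin n → K × ℕ)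
    (f : MvPolynomial (Fin n) K) : K :=
  MvPolynomial.eval (fun i => (c i).1) (hderiv c f)


-- ===== auxiliary lemmas =====
section Aux
open Equiv

variable {R' : Type*} [CommRing R']

lemma hcol_val {n m : ℕ} (zj : R' × ℕ) (i : Fin n) (j : Fin m) (h : (i:ℕ) = (j:ℕ)) :
    hcol n zj i = hcol m zj j := by
  simp [hcol, h]

lemma gvd_eq_det {l : List (R' × ℕ)} {n : ℕ} (h : l.length = n) (f : Fin n → R' × ℕ)
    (hf : ∀ i : Fin n, l.get (Fin.cast h.symm i) = f i) :
    gvd l = (Matrix.of fun i j : Fin n => hcol n (f j) i).det := by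
  subst h; unfold gvd; congr 1; ext i j
  have h2 : l.get j = f j := by simpa using hf j
  simp only [Matrix.of_apply, h2]

lemma gvd_congr_perm {l l' : List (R' × ℕ)} {n : ℕ} (h : l.length = n) (h' : l'.length = n)
    (e : Equiv.Perm (Fin n))
    (hg : ∀ i : Fin n, l'.get (Fin.cast h'.symm i) = l.get (Fin.cast h.symm (e i))) :
    gvd l' = (Equiv.Perm.sign e : ℤ) * gvd l := by
  rw [gvd_eq_det h' (fun i => l.get (Fin.cast h.symm (e i))) hg,
      gvd_eq_det h (fun i => l.get (Fin.cast h.symm i)) (fun i => rfl)]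
  have := Matrix.det_permute' e (Matrix.of fun i j : Fin n => hcol n (l.get (Fin.cast h.symm j)) i)
  rw [← this]; rfl

lemma gvd_map {S' : Type*} [CommRing S'] (f : R' →+* S') (l : List (R' × ℕ)) :
    gvd (l.map (Prod.map f id)) = f (gvd l) := by
  rw [gvd_eq_det (l := l.map (Prod.map f id)) (n := l.length) (by simp)
      (fun j => Prod.map f id (l.get j)) (fun i => by simp)]
  unfold gvd
  rw [RingHom.map_det]
  congr 1
  ext i j
  simp [RingHom.mapMatrix_apply, hcol, Prod.map]

lemma plain_map {S' : Type*} [CommRing S'] (f : R' →+* S') (L : List R') :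
    (plain L).map (Prod.map f id) = plain (L.map f) := by
  simp [plain, List.map_map]

lemma getElem_idx_congr {α : Type*} {l : List α} {v v' : ℕ} (hv : v = v')
    (H : v < l.length) : l[v] = l[v']'(hv ▸ H) := by subst hv; rfl

lemma getElem_app3_1 {α : Type*} (l₁ l₂ l₃ : List α) (v : ℕ) (hv : v < l₁.length)
    (H : v < (l₁ ++ l₂ ++ l₃).length) : (l₁ ++ l₂ ++ l₃)[v] = l₁[v] := by
  rw [List.getElem_append_left (by simp; omega), List.getElem_append_left hv]

lemma getElem_app3_2 {α : Type*} (l₁ l₂ l₃ : List α) (v : ℕ) (hv₁ : l₁.length ≤ v)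
    (hv₂ : v - l₁.length < l₂.length)
    (H : v < (l₁ ++ l₂ ++ l₃).length) : (l₁ ++ l₂ ++ l₃)[v] = l₂[v - l₁.length] := by
  rw [List.getElem_append_left (by simp; omega), List.getElem_append_right hv₁]

lemma getElem_app3_3 {α : Type*} (l₁ l₂ l₃ : List α) (v : ℕ) (hv : l₁.length + l₂.length ≤ v)
    (H : v < (l₁ ++ l₂ ++ l₃).length) :
    (l₁ ++ l₂ ++ l₃)[v] = l₃[v - l₁.length - l₂.length]'(by simp at H; omega) := by
  rw [List.getElem_append_right (by simp; omega)]
  congr 1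
  simp; omega

lemma gvd_middle_perm (l₁ l₂ l₂' l₃ : List (R' × ℕ)) {m : ℕ}
    (h₂ : l₂.length = m) (h₂' : l₂'.length = m) (π : Equiv.Perm (Fin m))
    (hg : ∀ j : Fin m, l₂'.get (Fin.cast h₂'.symm j) = l₂.get (Fin.cast h₂.symm (π j))) :
    gvd (l₁ ++ l₂' ++ l₃) = (Equiv.Perm.sign π : ℤ) * gvd (l₁ ++ l₂ ++ l₃) := by
  set a := l₁.length with ha
  set c := l₃.length with hc
  have h : (l₁ ++ l₂ ++ l₃).length = a + (m + c) := by simp [h₂]; try omega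
  have h' : (l₁ ++ l₂' ++ l₃).length = a + (m + c) := by simp [h₂']; try omega
  set E : (Fin a ⊕ (Fin m ⊕ Fin c)) ≃ Fin (a + (m + c)) :=
    (Equiv.sumCongr (Equiv.refl (Fin a)) finSumFinEquiv).trans finSumFinEquiv with hE
  set e : Equiv.Perm (Fin (a + (m + c))) :=
    E.permCongr ((Equiv.refl (Fin a)).sumCongr (π.sumCongr (Equiv.refl (Fin c)))) with he
  have hsign : Equiv.Perm.sign e = Equiv.Perm.sign π := by
    simp [he, Equiv.Perm.sign_permCongr, Equiv.Perm.sign_sumCongr]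
  rw [gvd_congr_perm h h' e ?_, hsign]
  intro i
  obtain ⟨j, rfl⟩ := E.surjective i
  have heEj : ∀ jj, e (E jj) = E (((Equiv.refl (Fin a)).sumCongr (π.sumCongr (Equiv.refl (Fin c)))) jj) := by
    intro jj; simp [he, Equiv.permCongr_apply]
  rw [heEj]
  simp only [List.get_eq_getElem, Fin.coe_cast]
  rcases j with j₁ | j₂ | j₃
  · have hv : ((E (Sum.inl j₁)) : ℕ) = (j₁ : ℕ) := by simp [hE]
    simp only [Equiv.sumCongr_apply, Sum.map_inl, Equiv.refl_apply]
    rw [getElem_idx_congr (l := l₁ ++ l₂' ++ l₃) (v' := (j₁:ℕ)) hv,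
        getElem_idx_congr (l := l₁ ++ l₂ ++ l₃) (v' := (j₁:ℕ)) hv]
    rw [getElem_app3_1 _ _ _ _ j₁.isLt, getElem_app3_1 _ _ _ _ j₁.isLt]
  · have hv : ((E (Sum.inr (Sum.inl j₂))) : ℕ) = a + (j₂ : ℕ) := by simp [hE]
    have hv' : ((E (Sum.inr (Sum.inl (π j₂)))) : ℕ) = a + ((π j₂) : ℕ) := by simp [hE]
    simp only [Equiv.sumCongr_apply, Sum.map_inr, Sum.map_inl]
    rw [getElem_idx_congr (l := l₁ ++ l₂' ++ l₃) (v' := a + (j₂:ℕ)) hv,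
        getElem_idx_congr (l := l₁ ++ l₂ ++ l₃) (v' := a + ((π j₂):ℕ)) hv']
    rw [getElem_app3_2 _ _ _ _ (by omega) (by simp [h₂']; try omega),
        getElem_app3_2 _ _ _ _ (by omega) (by simp [h₂]; try omega)]
    have := hg j₂
    simp only [List.get_eq_getElem, Fin.coe_cast] at this
    rw [getElem_idx_congr (l := l₂') (v' := (j₂:ℕ)) (by omega),
        getElem_idx_congr (l := l₂) (v' := ((π j₂):ℕ)) (by omega)]
    exact this
  · have hv : ((E (Sum.inr (Sum.inr j₃))) : ℕ) = a + (m + (j₃ : ℕ)) := by simp [hE]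
    simp only [Equiv.sumCongr_apply, Sum.map_inr, Equiv.refl_apply]
    rw [getElem_idx_congr (l := l₁ ++ l₂' ++ l₃) (v' := a + (m + (j₃:ℕ))) hv,
        getElem_idx_congr (l := l₁ ++ l₂ ++ l₃) (v' := a + (m + (j₃:ℕ))) hv]
    rw [getElem_app3_3 _ _ _ _ (by simp [h₂']; try omega), getElem_app3_3 _ _ _ _ (by simp [h₂]; try omega)]
    congr 1 <;> simp [h₂, h₂'] <;> try omega

def reorderPerm {ι : Type*} [DecidableEq ι] {l l' : List ι} (h : l.Nodup) (h' : l'.Nodup)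
    (hm : ∀ x, x ∈ l ↔ x ∈ l') (hl : l.length = l'.length) : Equiv.Perm (Fin l.length) :=
  (finCongr hl).trans ((List.Nodup.getEquiv l' h').trans
    ((Equiv.subtypeEquivRight hm).symm.trans (List.Nodup.getEquiv l h).symm))

lemma get_reorderPerm {ι : Type*} [DecidableEq ι] {l l' : List ι} (h : l.Nodup) (h' : l'.Nodup)
    (hm : ∀ x, x ∈ l ↔ x ∈ l') (hl : l.length = l'.length) (j : Fin l.length) :
    l.get (reorderPerm h h' hm hl j) = l'.get (Fin.cast hl j) := by
  unfold reorderPerm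
  have key : ∀ x : {x // x ∈ l}, l.get ((List.Nodup.getEquiv l h).symm x) = (x : ι) := by
    intro x
    have h1 := (List.Nodup.getEquiv l h).apply_symm_apply x
    have h2 := congrArg Subtype.val h1
    simpa [List.Nodup.getEquiv] using h2
  simp only [Equiv.trans_apply, key]
  simp [List.Nodup.getEquiv, Equiv.subtypeEquivRight, finCongr]
  rfl

/-- The permutation relating `(C.image σ).sort` to `(C.sort).map σ`. -/
def imgPerm {n : ℕ} (σ : Equiv.Perm (Fin n)) (C : Finset (Fin n)) :
    Equiv.Perm (Fin (((C.image σ).sort (· ≤ ·)).length)) :=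
  reorderPerm (Finset.sort_nodup _ _) ((Finset.sort_nodup C (· ≤ ·)).map σ.injective)
    (by
      intro x
      simp only [Finset.mem_sort, Finset.mem_image, List.mem_map])
    (by simp [Finset.card_image_of_injective _ σ.injective])

lemma imgPerm_len {n : ℕ} (σ : Equiv.Perm (Fin n)) (C : Finset (Fin n)) :
    (((C.image σ).sort (· ≤ ·)).length) = ((C.sort (· ≤ ·)).length) := by
  simp [Finset.card_image_of_injective _ σ.injective]

lemma get_imgPerm {n : ℕ} (σ : Equiv.Perm (Fin n)) (C : Finset (Fin n))
    (j : Fin (((C.image σ).sort (· ≤ ·)).length)) :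
    ((C.image σ).sort (· ≤ ·)).get (imgPerm σ C j) =
      σ ((C.sort (· ≤ ·)).get (Fin.cast (imgPerm_len σ C) j)) := by
  unfold imgPerm
  rw [get_reorderPerm]
  simp [List.get_eq_getElem, List.getElem_map]

lemma compl_image {n : ℕ} (σ : Equiv.Perm (Fin n)) (S : Finset (Fin n)) :
    (S.image σ)ᶜ = Sᶜ.image σ := by
  ext x
  simp only [Finset.mem_compl, Finset.mem_image]
  constructor
  · intro h
    refine ⟨σ.symm x, fun hmem => h ⟨σ.symm x, hmem, σ.apply_symm_apply x⟩, σ.apply_symm_apply x⟩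
  · rintro ⟨a, ha, rfl⟩ ⟨b, hb, hba⟩
    exact ha (σ.injective hba ▸ hb)

lemma splitPerm_apply {n : ℕ} (S : Finset (Fin n)) (i : Fin n) :
    splitPerm S i = (splitList S).get (finCongr (splitList_length S).symm i) := rfl

lemma splitList_getElem_left {n : ℕ} (S : Finset (Fin n)) (v : ℕ) (hv : v < n - S.card)
    (H : v < (splitList S).length) :
    (splitList S)[v] = (Sᶜ.sort (· ≤ ·))[v]'(by
      simp only [Finset.length_sort, Finset.card_compl, Fintype.card_fin]; omega) := by
  unfold splitList
  exact List.getElem_append_left _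

lemma splitList_getElem_right {n : ℕ} (S : Finset (Fin n)) (v : ℕ) (hv : n - S.card ≤ v)
    (H : v < (splitList S).length) :
    (splitList S)[v] = (S.sort (· ≤ ·))[v - (n - S.card)]'(by
      have h2 := splitList_length S
      have h3 : S.card ≤ n := le_trans (Finset.card_le_univ S) (by simp)
      simp only [Finset.length_sort]
      omega) := by
  unfold splitList
  refine (List.getElem_append_right (by
    simp only [Finset.length_sort, Finset.card_compl, Fintype.card_fin]; omega)).trans ?_
  congr 1
  simp only [Finset.length_sort, Finset.card_compl, Fintype.card_fin]

lemma sign_splitPerm_image {n : ℕ} (σ : Equiv.Perm (Fin n)) (S : Finset (Fin n)) :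
    Equiv.Perm.sign σ * Equiv.Perm.sign (splitPerm S) =
      Equiv.Perm.sign (splitPerm (S.image σ)) *
        (Equiv.Perm.sign (imgPerm σ Sᶜ) * Equiv.Perm.sign (imgPerm σ S)) := by
  classical
  have hSle : S.card ≤ n := le_trans (Finset.card_le_univ S) (by simp)
  have hcompl : (S.image σ)ᶜ = Sᶜ.image σ := compl_image σ S
  have hlen1 : ((Sᶜ.image σ).sort (· ≤ ·)).length = n - S.card := by
    simp [Finset.card_image_of_injective _ σ.injective, Finset.card_compl]
  have hlen2 : ((S.image σ).sort (· ≤ ·)).length = S.card := by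
    simp [Finset.card_image_of_injective _ σ.injective]
  have hcard' : (S.image σ).card = S.card := Finset.card_image_of_injective _ σ.injective
  have hn : ((Sᶜ.image σ).sort (· ≤ ·)).length + ((S.image σ).sort (· ≤ ·)).length = n := by
    rw [hlen1, hlen2]; omega
  set E : (Fin ((Sᶜ.image σ).sort (· ≤ ·)).length ⊕ Fin ((S.image σ).sort (· ≤ ·)).length)
      ≃ Fin n := finSumFinEquiv.trans (finCongr hn) with hE
  set π₁ : Equiv.Perm (Fin ((Sᶜ.image σ).sort (· ≤ ·)).length) := imgPerm σ Sᶜ with hπ₁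
  set π₂ : Equiv.Perm (Fin ((S.image σ).sort (· ≤ ·)).length) := imgPerm σ S with hπ₂
  set τ : Equiv.Perm (Fin n) := E.permCongr (π₁.sumCongr π₂) with hτ
  have key : σ * splitPerm S = splitPerm (S.image σ) * τ := by
    ext i
    obtain ⟨j, rfl⟩ := E.surjective i
    have hτEj : τ (E j) = E ((π₁.sumCongr π₂) j) := by
      simp [hτ, Equiv.permCongr_apply]
    simp only [Equiv.Perm.mul_apply, hτEj]
    rw [splitPerm_apply, splitPerm_apply]
    simp only [List.get_eq_getElem, Fin.coe_cast, finCongr_apply]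
    rcases j with j₁ | j₂
    · -- first block
      have hv : ((E (Sum.inl j₁)) : ℕ) = (j₁ : ℕ) := by simp [hE]
      have hv' : ((E (Sum.inl (π₁ j₁))) : ℕ) = ((π₁ j₁) : ℕ) := by simp [hE]
      have hj₁ : (j₁ : ℕ) < n - S.card := by have h := j₁.isLt; omega
      have hp₁ : ((π₁ j₁) : ℕ) < n - S.card := by have h := (π₁ j₁).isLt; omega
      have step : Sum.map (⇑π₁) (⇑π₂) (Sum.inl j₁) = Sum.inl (π₁ j₁) := rfl
      simp only [Equiv.sumCongr_apply, step]
      rw [getElem_idx_congr (v' := (j₁ : ℕ)) hv,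
          getElem_idx_congr (v' := ((π₁ j₁) : ℕ)) hv']
      rw [splitList_getElem_left S _ hj₁,
          splitList_getElem_left (S.image σ) _ (by omega)]
      simp only [hcompl]
      have h9 := get_imgPerm σ Sᶜ j₁
      simp only [List.get_eq_getElem, Fin.coe_cast] at h9
      exact congrArg Fin.val h9.symm
    · -- second block
      have hv : ((E (Sum.inr j₂)) : ℕ)
          = ((Sᶜ.image σ).sort (· ≤ ·)).length + (j₂ : ℕ) := by simp [hE]
      have hv' : ((E (Sum.inr (π₂ j₂))) : ℕ)
          = ((Sᶜ.image σ).sort (· ≤ ·)).length + ((π₂ j₂) : ℕ) := by simp [hE]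
      have hj₂ : (j₂ : ℕ) < S.card := by have h := j₂.isLt; omega
      have hp₂ : ((π₂ j₂) : ℕ) < S.card := by have h := (π₂ j₂).isLt; omega
      have step : Sum.map (⇑π₁) (⇑π₂) (Sum.inr j₂) = Sum.inr (π₂ j₂) := rfl
      simp only [Equiv.sumCongr_apply, step]
      rw [getElem_idx_congr (v' := ((Sᶜ.image σ).sort (· ≤ ·)).length + (j₂ : ℕ)) hv,
          getElem_idx_congr (v' := ((Sᶜ.image σ).sort (· ≤ ·)).length + ((π₂ j₂) : ℕ)) hv']
      rw [splitList_getElem_right S (((Sᶜ.image σ).sort (· ≤ ·)).length + (j₂ : ℕ)) (by omega),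
          splitList_getElem_right (S.image σ)
            (((Sᶜ.image σ).sort (· ≤ ·)).length + ((π₂ j₂) : ℕ)) (by omega)]
      have hidx1 : ((Sᶜ.image σ).sort (· ≤ ·)).length + (j₂ : ℕ) - (n - S.card)
          = (j₂ : ℕ) := by omega
      have hidx2 : ((Sᶜ.image σ).sort (· ≤ ·)).length + ((π₂ j₂) : ℕ) - (n - (S.image σ).card)
          = ((π₂ j₂) : ℕ) := by omega
      rw [getElem_idx_congr (v' := (j₂ : ℕ)) hidx1,
          getElem_idx_congr (v' := ((π₂ j₂) : ℕ)) hidx2]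
      have h9 := get_imgPerm σ S j₂
      simp only [List.get_eq_getElem, Fin.coe_cast] at h9
      exact congrArg Fin.val h9.symm
  have hsgn := congrArg Equiv.Perm.sign key
  simp only [map_mul] at hsgn
  rw [hsgn]
  congr 1
  simp [hτ, Equiv.Perm.sign_permCongr, Equiv.Perm.sign_sumCongr]

lemma rename_gvd_plain {K : Type*} [Field K] {τ υ : Type*} (f : τ → υ)
    (L : List (MvPolynomial τ K)) :
    (MvPolynomial.rename f) (gvd (plain L)) = gvd (plain (L.map (MvPolynomial.rename f))) := by
  have h := gvd_map ((MvPolynomial.rename f :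
      MvPolynomial τ K →ₐ[K] MvPolynomial υ K) : MvPolynomial τ K →+* MvPolynomial υ K) (plain L)
  rw [plain_map] at h
  simpa using h.symm

lemma sgnK_image {n : ℕ} (σ : Equiv.Perm (Fin n)) (hσ : Equiv.Perm.sign σ = -1)
    (S : Finset (Fin n)) :
    (sgnK S : ℤ) * ((Equiv.Perm.sign (imgPerm σ Sᶜ) : ℤ) * (Equiv.Perm.sign (imgPerm σ S) : ℤ))
      = -(sgnK (S.image σ)) := by
  have h1 := sign_splitPerm_image σ S
  rw [hσ] at h1
  unfold sgnK
  rcases Int.units_eq_one_or (Equiv.Perm.sign (splitPerm S)) with h2|h2 <;>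
  rcases Int.units_eq_one_or (Equiv.Perm.sign (splitPerm (S.image σ))) with h3|h3 <;>
  rcases Int.units_eq_one_or (Equiv.Perm.sign (imgPerm σ Sᶜ)) with h4|h4 <;>
  rcases Int.units_eq_one_or (Equiv.Perm.sign (imgPerm σ S)) with h5|h5 <;>
  rw [h2, h3, h4, h5] at h1 ⊢ <;> simp_all

lemma smul_sign_step {A : Type*} [CommRing A] (G₁ G₂ : A) (c c' s₁ s₂ : ℤ)
    (h : c * (s₁ * s₂) = -c') :
    c • (((s₁ : A) * G₁) * ((s₂ : A) * G₂)) = -(c' • (G₁ * G₂)) := by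
  rw [zsmul_eq_mul, zsmul_eq_mul]
  have h2 : ((c * (s₁ * s₂) : ℤ) : A) = ((-c' : ℤ) : A) := by rw [h]
  push_cast at h2
  calc (c : A) * (((s₁ : A) * G₁) * ((s₂ : A) * G₂))
      = ((c : A) * ((s₁ : A) * (s₂ : A))) * (G₁ * G₂) := by ring
    _ = -((c' : A) * (G₁ * G₂)) := by rw [h2]; ring

lemma reindex_image {n : ℕ} {M : Type*} [AddCommMonoid M] (σ : Equiv.Perm (Fin n)) (k : ℕ)
    (g : Finset (Fin n) → M) :
    ∑ S ∈ Finset.powersetCard k (Finset.univ : Finset (Fin n)), g (S.image σ)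
      = ∑ S ∈ Finset.powersetCard k (Finset.univ : Finset (Fin n)), g S := by
  refine Finset.sum_nbij' (fun S => S.image σ) (fun S => S.image σ.symm) ?_ ?_ ?_ ?_ ?_
  · intro S hS
    rw [Finset.mem_powersetCard_univ] at hS ⊢
    rw [Finset.card_image_of_injective _ σ.injective, hS]
  · intro S hS
    rw [Finset.mem_powersetCard_univ] at hS ⊢
    rw [Finset.card_image_of_injective _ σ.symm.injective, hS]
  · intro S _
    simp [Finset.image_image, Equiv.symm_comp_self]
  · intro S _
    simp [Finset.image_image, Equiv.self_comp_symm]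
  · intro S _
    rfl

end Aux


variable (K : Type*) [Field K] [CharZero K]

/-- The variable `X_i`. -/
def Xv {p q : ℕ} (i : Fin p) : MvPolynomial ((Fin p ⊕ Fin q) ⊕ Fin 1) K :=
  MvPolynomial.X (Sum.inl (Sum.inl i))

/-- The variable `Y_i`. -/
def Yv {p q : ℕ} (i : Fin q) : MvPolynomial ((Fin p ⊕ Fin q) ⊕ Fin 1) K :=
  MvPolynomial.X (Sum.inl (Sum.inr i))

/-- The variable `U`. -/
def Uv {p q : ℕ} : MvPolynomial ((Fin p ⊕ Fin q) ⊕ Fin 1) K :=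
  MvPolynomial.X (Sum.inr 0)

/-- The polynomial
`F^{k,ℓ}(X,Y)(U) = Σ_{X'⊂_k X, Y'⊂_ℓ Y} s_{X'} s_{Y'} V((Y∖Y')‖(X∖X')) · V(Y'‖X'‖U)`. -/
def Fkl (p q k l : ℕ) : MvPolynomial ((Fin p ⊕ Fin q) ⊕ Fin 1) K :=
  ∑ S ∈ Finset.powersetCard k (Finset.univ : Finset (Fin p)),
    ∑ T ∈ Finset.powersetCard l (Finset.univ : Finset (Fin q)),
      (sgnK S * sgnK T) •
        (gvd (plain (subL (Yv K) Tᶜ ++ subL (Xv K) Sᶜ)) *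
          gvd (plain (subL (Yv K) T ++ subL (Xv K) S ++ [Uv K])))

lemma Fkl_rename_left (p q k l : ℕ) (σ : Equiv.Perm (Fin p))
    (hσ : Equiv.Perm.sign σ = -1) :
    (MvPolynomial.rename (Sum.map (Sum.map (⇑σ) id) id)) (Fkl K p q k l) = -Fkl K p q k l := by
  classical
  set φ : ((Fin p ⊕ Fin q) ⊕ Fin 1) → ((Fin p ⊕ Fin q) ⊕ Fin 1) :=
    Sum.map (Sum.map (⇑σ) id) id with hφ
  have hYv : ∀ j : Fin q, MvPolynomial.rename φ (Yv K (p := p) j) = Yv K j := by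
    intro j; simp [Yv, MvPolynomial.rename_X, hφ]
  have hXv : ∀ i : Fin p, MvPolynomial.rename φ (Xv K (q := q) i) = Xv K (σ i) := by
    intro i; simp [Xv, MvPolynomial.rename_X, hφ]
  have hUv : MvPolynomial.rename φ (Uv K (p := p) (q := q)) = Uv K := by
    simp [Uv, MvPolynomial.rename_X, hφ]
  have hYc : (MvPolynomial.rename φ) ∘ (Yv K (p := p) (q := q)) = Yv K := funext hYv
  have hXc : (MvPolynomial.rename φ) ∘ (Xv K (p := p) (q := q)) = fun i => Xv K (σ i) :=
    funext hXv
  have main : ∀ (S : Finset (Fin p)) (T : Finset (Fin q)),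
      (MvPolynomial.rename φ) ((sgnK S * sgnK T) •
        (gvd (plain (subL (Yv K) Tᶜ ++ subL (Xv K) Sᶜ)) *
          gvd (plain (subL (Yv K) T ++ subL (Xv K) S ++ [Uv K]))))
      = -((sgnK (S.image σ) * sgnK T) •
        (gvd (plain (subL (Yv K) Tᶜ ++ subL (Xv K) (S.image σ)ᶜ)) *
          gvd (plain (subL (Yv K) T ++ subL (Xv K) (S.image σ) ++ [Uv K])))) := by
    intro S T
    have e1 : (MvPolynomial.rename φ) (gvd (plain (subL (Yv K) Tᶜ ++ subL (Xv K) Sᶜ)))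
        = ((Equiv.Perm.sign (imgPerm σ Sᶜ) : ℤ) : MvPolynomial ((Fin p ⊕ Fin q) ⊕ Fin 1) K) *
          gvd (plain (subL (Yv K) Tᶜ ++ subL (Xv K) (S.image σ)ᶜ)) := by
      rw [rename_gvd_plain]
      have hmap : (subL (Yv K) Tᶜ ++ subL (Xv K) Sᶜ).map (MvPolynomial.rename φ)
          = subL (Yv K) Tᶜ ++ (Sᶜ.sort (· ≤ ·)).map (fun i => Xv K (σ i)) := by
        rw [List.map_append]
        simp [subL, List.map_map, hYc, hXc]
      rw [hmap]
      have hplain : plain (subL (Yv K) Tᶜ ++ (Sᶜ.sort (· ≤ ·)).map (fun i => Xv K (σ i)))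
          = plain (subL (Yv K) Tᶜ) ++ plain ((Sᶜ.sort (· ≤ ·)).map (fun i => Xv K (σ i)))
            ++ [] := by
        simp [plain]
      have hplain' : plain (subL (Yv K) Tᶜ ++ subL (Xv K) (S.image σ)ᶜ)
          = plain (subL (Yv K) Tᶜ) ++ plain (subL (Xv K) (Sᶜ.image σ)) ++ [] := by
        rw [compl_image]; simp [plain]
      rw [hplain, hplain']
      refine gvd_middle_perm _ _ _ _ (by simp [plain, subL])
        (by simp [plain, Finset.card_image_of_injective _ σ.injective]) (imgPerm σ Sᶜ) ?_
      intro j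
      simp only [plain, subL, List.map_map, List.get_eq_getElem, List.getElem_map, Fin.coe_cast]
      have h9 := get_imgPerm σ Sᶜ j
      simp only [List.get_eq_getElem, Fin.coe_cast] at h9
      exact congrArg (fun x => (Xv K x, (0:ℕ))) h9.symm
    have e2 : (MvPolynomial.rename φ)
          (gvd (plain (subL (Yv K) T ++ subL (Xv K) S ++ [Uv K])))
        = ((Equiv.Perm.sign (imgPerm σ S) : ℤ) : MvPolynomial ((Fin p ⊕ Fin q) ⊕ Fin 1) K) *
          gvd (plain (subL (Yv K) T ++ subL (Xv K) (S.image σ) ++ [Uv K])) := by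
      rw [rename_gvd_plain]
      have hmap : (subL (Yv K) T ++ subL (Xv K) S ++ [Uv K]).map (MvPolynomial.rename φ)
          = subL (Yv K) T ++ (S.sort (· ≤ ·)).map (fun i => Xv K (σ i)) ++ [Uv K] := by
        rw [List.map_append, List.map_append]
        simp [subL, List.map_map, hYc, hXc, hUv]
      rw [hmap]
      have hplain : plain (subL (Yv K) T ++ (S.sort (· ≤ ·)).map (fun i => Xv K (σ i)) ++ [Uv K])
          = plain (subL (Yv K) T) ++ plain ((S.sort (· ≤ ·)).map (fun i => Xv K (σ i)))
            ++ plain [Uv K] := by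
        simp [plain]
      have hplain' : plain (subL (Yv K) T ++ subL (Xv K) (S.image σ) ++ [Uv K])
          = plain (subL (Yv K) T) ++ plain (subL (Xv K) (S.image σ)) ++ plain [Uv K] := by
        simp [plain]
      rw [hplain, hplain']
      refine gvd_middle_perm _ _ _ _ (by simp [plain, subL])
        (by simp [plain, Finset.card_image_of_injective _ σ.injective]) (imgPerm σ S) ?_
      intro j
      simp only [plain, subL, List.map_map, List.get_eq_getElem, List.getElem_map, Fin.coe_cast]
      have h9 := get_imgPerm σ S j
      simp only [List.get_eq_getElem, Fin.coe_cast] at h9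
      exact congrArg (fun x => (Xv K x, (0:ℕ))) h9.symm
    rw [map_zsmul, map_mul, e1, e2]
    refine smul_sign_step _ _ _ _ _ _ ?_
    have hs := sgnK_image σ hσ S
    linear_combination (sgnK T) * hs
  unfold Fkl
  rw [map_sum]
  calc ∑ S ∈ Finset.powersetCard k (Finset.univ : Finset (Fin p)),
        (MvPolynomial.rename φ) (∑ T ∈ Finset.powersetCard l (Finset.univ : Finset (Fin q)),
          (sgnK S * sgnK T) •
            (gvd (plain (subL (Yv K) Tᶜ ++ subL (Xv K) Sᶜ)) *
              gvd (plain (subL (Yv K) T ++ subL (Xv K) S ++ [Uv K]))))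
      = ∑ S ∈ Finset.powersetCard k (Finset.univ : Finset (Fin p)),
          ∑ T ∈ Finset.powersetCard l (Finset.univ : Finset (Fin q)),
            -((sgnK (S.image σ) * sgnK T) •
              (gvd (plain (subL (Yv K) Tᶜ ++ subL (Xv K) (S.image σ)ᶜ)) *
                gvd (plain (subL (Yv K) T ++ subL (Xv K) (S.image σ) ++ [Uv K])))) := by
        refine Finset.sum_congr rfl fun S _ => ?_
        rw [map_sum]
        exact Finset.sum_congr rfl fun T _ => main S T
    _ = -∑ S ∈ Finset.powersetCard k (Finset.univ : Finset (Fin p)),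
          ∑ T ∈ Finset.powersetCard l (Finset.univ : Finset (Fin q)),
            ((sgnK (S.image σ) * sgnK T) •
              (gvd (plain (subL (Yv K) Tᶜ ++ subL (Xv K) (S.image σ)ᶜ)) *
                gvd (plain (subL (Yv K) T ++ subL (Xv K) (S.image σ) ++ [Uv K])))) := by
        simp [Finset.sum_neg_distrib]
    _ = -∑ S ∈ Finset.powersetCard k (Finset.univ : Finset (Fin p)),
          ∑ T ∈ Finset.powersetCard l (Finset.univ : Finset (Fin q)),
            ((sgnK S * sgnK T) •
              (gvd (plain (subL (Yv K) Tᶜ ++ subL (Xv K) Sᶜ)) *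
                gvd (plain (subL (Yv K) T ++ subL (Xv K) S ++ [Uv K])))) := by
        exact congrArg Neg.neg (reindex_image σ k
          (fun S => ∑ T ∈ Finset.powersetCard l (Finset.univ : Finset (Fin q)),
            ((sgnK S * sgnK T) •
              (gvd (plain (subL (Yv K) Tᶜ ++ subL (Xv K) Sᶜ)) *
                gvd (plain (subL (Yv K) T ++ subL (Xv K) S ++ [Uv K]))))))


lemma Fkl_rename_right (p q k l : ℕ) (σ : Equiv.Perm (Fin q))
    (hσ : Equiv.Perm.sign σ = -1) :
    (MvPolynomial.rename (Sum.map (Sum.map id (⇑σ)) id)) (Fkl K p q k l) = -Fkl K p q k l := by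
  classical
  set φ : ((Fin p ⊕ Fin q) ⊕ Fin 1) → ((Fin p ⊕ Fin q) ⊕ Fin 1) :=
    Sum.map (Sum.map id (⇑σ)) id with hφ
  have hYv : ∀ j : Fin q, MvPolynomial.rename φ (Yv K (p := p) j) = Yv K (σ j) := by
    intro j; simp [Yv, MvPolynomial.rename_X, hφ]
  have hXv : ∀ i : Fin p, MvPolynomial.rename φ (Xv K (q := q) i) = Xv K i := by
    intro i; simp [Xv, MvPolynomial.rename_X, hφ]
  have hUv : MvPolynomial.rename φ (Uv K (p := p) (q := q)) = Uv K := by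
    simp [Uv, MvPolynomial.rename_X, hφ]
  have hYc : (MvPolynomial.rename φ) ∘ (Yv K (p := p) (q := q)) = fun j => Yv K (σ j) :=
    funext hYv
  have hXc : (MvPolynomial.rename φ) ∘ (Xv K (p := p) (q := q)) = Xv K := funext hXv
  have main : ∀ (S : Finset (Fin p)) (T : Finset (Fin q)),
      (MvPolynomial.rename φ) ((sgnK S * sgnK T) •
        (gvd (plain (subL (Yv K) Tᶜ ++ subL (Xv K) Sᶜ)) *
          gvd (plain (subL (Yv K) T ++ subL (Xv K) S ++ [Uv K]))))
      = -((sgnK S * sgnK (T.image σ)) •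
        (gvd (plain (subL (Yv K) (T.image σ)ᶜ ++ subL (Xv K) Sᶜ)) *
          gvd (plain (subL (Yv K) (T.image σ) ++ subL (Xv K) S ++ [Uv K])))) := by
    intro S T
    have e1 : (MvPolynomial.rename φ) (gvd (plain (subL (Yv K) Tᶜ ++ subL (Xv K) Sᶜ)))
        = ((Equiv.Perm.sign (imgPerm σ Tᶜ) : ℤ) : MvPolynomial ((Fin p ⊕ Fin q) ⊕ Fin 1) K) *
          gvd (plain (subL (Yv K) (T.image σ)ᶜ ++ subL (Xv K) Sᶜ)) := by
      rw [rename_gvd_plain]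
      have hmap : (subL (Yv K) Tᶜ ++ subL (Xv K) Sᶜ).map (MvPolynomial.rename φ)
          = (Tᶜ.sort (· ≤ ·)).map (fun j => Yv K (σ j)) ++ subL (Xv K) Sᶜ := by
        rw [List.map_append]
        simp [subL, List.map_map, hYc, hXc]
      rw [hmap]
      have hplain : plain ((Tᶜ.sort (· ≤ ·)).map (fun j => Yv K (σ j)) ++ subL (Xv K) Sᶜ)
          = [] ++ plain ((Tᶜ.sort (· ≤ ·)).map (fun j => Yv K (σ j)))
            ++ plain (subL (Xv K) Sᶜ) := by
        simp [plain]
      have hplain' : plain (subL (Yv K) (T.image σ)ᶜ ++ subL (Xv K) Sᶜ)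
          = [] ++ plain (subL (Yv K) (Tᶜ.image σ)) ++ plain (subL (Xv K) Sᶜ) := by
        rw [compl_image]; simp [plain]
      rw [hplain, hplain']
      refine gvd_middle_perm _ _ _ _ (by simp [plain, subL])
        (by simp [plain, Finset.card_image_of_injective _ σ.injective]) (imgPerm σ Tᶜ) ?_
      intro j
      simp only [plain, subL, List.map_map, List.get_eq_getElem, List.getElem_map, Fin.coe_cast]
      have h9 := get_imgPerm σ Tᶜ j
      simp only [List.get_eq_getElem, Fin.coe_cast] at h9
      exact congrArg (fun x => (Yv K x, (0:ℕ))) h9.symm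
    have e2 : (MvPolynomial.rename φ)
          (gvd (plain (subL (Yv K) T ++ subL (Xv K) S ++ [Uv K])))
        = ((Equiv.Perm.sign (imgPerm σ T) : ℤ) : MvPolynomial ((Fin p ⊕ Fin q) ⊕ Fin 1) K) *
          gvd (plain (subL (Yv K) (T.image σ) ++ subL (Xv K) S ++ [Uv K])) := by
      rw [rename_gvd_plain]
      have hmap : (subL (Yv K) T ++ subL (Xv K) S ++ [Uv K]).map (MvPolynomial.rename φ)
          = (T.sort (· ≤ ·)).map (fun j => Yv K (σ j)) ++ subL (Xv K) S ++ [Uv K] := by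
        rw [List.map_append, List.map_append]
        simp [subL, List.map_map, hYc, hXc, hUv]
      rw [hmap]
      have hplain : plain ((T.sort (· ≤ ·)).map (fun j => Yv K (σ j)) ++ subL (Xv K) S ++ [Uv K])
          = [] ++ plain ((T.sort (· ≤ ·)).map (fun j => Yv K (σ j)))
            ++ plain (subL (Xv K) S ++ [Uv K]) := by
        simp [plain]
      have hplain' : plain (subL (Yv K) (T.image σ) ++ subL (Xv K) S ++ [Uv K])
          = [] ++ plain (subL (Yv K) (T.image σ)) ++ plain (subL (Xv K) S ++ [Uv K]) := by
        simp [plain]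
      rw [hplain, hplain']
      refine gvd_middle_perm _ _ _ _ (by simp [plain, subL])
        (by simp [plain, Finset.card_image_of_injective _ σ.injective]) (imgPerm σ T) ?_
      intro j
      simp only [plain, subL, List.map_map, List.get_eq_getElem, List.getElem_map, Fin.coe_cast]
      have h9 := get_imgPerm σ T j
      simp only [List.get_eq_getElem, Fin.coe_cast] at h9
      exact congrArg (fun x => (Yv K x, (0:ℕ))) h9.symm
    rw [map_zsmul, map_mul, e1, e2]
    refine smul_sign_step _ _ _ _ _ _ ?_
    have hs := sgnK_image σ hσ T
    linear_combination (sgnK S) * hs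
  unfold Fkl
  rw [map_sum]
  calc ∑ S ∈ Finset.powersetCard k (Finset.univ : Finset (Fin p)),
        (MvPolynomial.rename φ) (∑ T ∈ Finset.powersetCard l (Finset.univ : Finset (Fin q)),
          (sgnK S * sgnK T) •
            (gvd (plain (subL (Yv K) Tᶜ ++ subL (Xv K) Sᶜ)) *
              gvd (plain (subL (Yv K) T ++ subL (Xv K) S ++ [Uv K]))))
      = ∑ S ∈ Finset.powersetCard k (Finset.univ : Finset (Fin p)),
          ∑ T ∈ Finset.powersetCard l (Finset.univ : Finset (Fin q)),
            -((sgnK S * sgnK (T.image σ)) •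
              (gvd (plain (subL (Yv K) (T.image σ)ᶜ ++ subL (Xv K) Sᶜ)) *
                gvd (plain (subL (Yv K) (T.image σ) ++ subL (Xv K) S ++ [Uv K])))) := by
        refine Finset.sum_congr rfl fun S _ => ?_
        rw [map_sum]
        exact Finset.sum_congr rfl fun T _ => main S T
    _ = -∑ S ∈ Finset.powersetCard k (Finset.univ : Finset (Fin p)),
          ∑ T ∈ Finset.powersetCard l (Finset.univ : Finset (Fin q)),
            ((sgnK S * sgnK (T.image σ)) •
              (gvd (plain (subL (Yv K) (T.image σ)ᶜ ++ subL (Xv K) Sᶜ)) *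
                gvd (plain (subL (Yv K) (T.image σ) ++ subL (Xv K) S ++ [Uv K])))) := by
        simp [Finset.sum_neg_distrib]
    _ = -∑ S ∈ Finset.powersetCard k (Finset.univ : Finset (Fin p)),
          ∑ T ∈ Finset.powersetCard l (Finset.univ : Finset (Fin q)),
            ((sgnK S * sgnK T) •
              (gvd (plain (subL (Yv K) Tᶜ ++ subL (Xv K) Sᶜ)) *
                gvd (plain (subL (Yv K) T ++ subL (Xv K) S ++ [Uv K])))) := by
        refine congrArg Neg.neg (Finset.sum_congr rfl fun S _ => ?_)
        exact reindex_image σ l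
          (fun T => ((sgnK S * sgnK T) •
            (gvd (plain (subL (Yv K) Tᶜ ++ subL (Xv K) Sᶜ)) *
              gvd (plain (subL (Yv K) T ++ subL (Xv K) S ++ [Uv K])))))


/-- `F^{k,ℓ}` is antisymmetric in the `X` variables and in the
`Y` variables. -/
theorem Fkl_antisymmetric (p q k l : ℕ) :
    (∀ a b : Fin p, a ≠ b →
      MvPolynomial.rename (Sum.map (Sum.map (Equiv.swap a b) id) id) (Fkl K p q k l) =
        -Fkl K p q k l) ∧
    (∀ a b : Fin q, a ≠ b →
      MvPolynomial.rename (Sum.map (Sum.map id (Equiv.swap a b)) id) (Fkl K p q k l) =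
        -Fkl K p q k l) := by
  constructor
  · intro a b hab
    exact Fkl_rename_left K p q k l (Equiv.swap a b) (Equiv.Perm.sign_swap hab)
  · intro a b hab
    exact Fkl_rename_right K p q k l (Equiv.swap a b) (Equiv.Perm.sign_swap hab)

end
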